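/- Let e ≥ 1 and Δ be integers with 1 ≤ Δ < 2^e, and set m = 2^e + Δ. If t is an integer with 2Δ + 1 ≤ t ≤ 2^e such that C(t−Δ−1, Δ) is even, and A = Δ, then C(2m−t, m) + C(2m−A−t, m−t) is odd. -/

import Mathlib

lemma land_zero_iff' (a b : ℕ) :
    a &&& b = 0 ↔ ∀ i, ¬(a.testBit i = true ∧ b.testBit i = true) := by
  constructor
  · intro h i ⟨ha, hb⟩
    have := Nat.testBit_land a b i
    rw [h, Nat.zero_testBit, ha, hb] at this
    simp at this
  · intro h
    apply Nat.zero_of_testBit_eq_false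
    intro i
    rw [Nat.testBit_land]
    by_contra hc
    rw [Bool.not_eq_false, Bool.and_eq_true] at hc
    exact h i hc

lemma land_div2' (a b : ℕ) : a / 2 &&& b / 2 = (a &&& b) / 2 := by
  apply Nat.eq_of_testBit_eq
  intro i
  simp [Nat.testBit_div_two, Nat.testBit_land]

lemma bit_lt' {x e i : ℕ} (hx : x < 2 ^ e) (h : x.testBit i = true) : i < e := by
  have h1 := Nat.ge_two_pow_of_testBit h
  by_contra hie
  have : (2:ℕ) ^ e ≤ 2 ^ i := Nat.pow_le_pow_right (by norm_num) (by omega)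
  omega

lemma parityL : ∀ n a b : ℕ, a + b = n → (Odd ((a + b).choose a) ↔ a &&& b = 0) := by
  intro n
  induction n using Nat.strong_induction_on with
  | _ n ih =>
    intro a b hab
    haveI : Fact (Nat.Prime 2) := ⟨Nat.prime_two⟩
    have lucas : (a + b).choose a % 2
        = ((a + b) % 2).choose (a % 2) * ((a + b) / 2).choose (a / 2) % 2 :=
      Choose.choose_modEq_choose_mod_mul_choose_div_nat
    rcases Nat.mod_two_eq_zero_or_one a with ha | ha <;>
      rcases Nat.mod_two_eq_zero_or_one b with hb | hb
    -- case both even / mixed: handled uniformly below except both-odd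
    case inr.inr =>
      -- a, b both odd
      have hab2 : (a + b) % 2 = 0 := by omega
      rw [hab2, ha] at lucas
      simp [Nat.choose] at lucas
      constructor
      · intro hodd
        rw [Nat.odd_iff] at hodd
        omega
      · intro h0
        exfalso
        have := Nat.testBit_land a b 0
        rw [h0, Nat.zero_testBit] at this
        simp [Nat.testBit_zero, ha, hb] at this
    all_goals
      have hdiv : (a + b) / 2 = a / 2 + b / 2 := by omega
      have hone : ((a + b) % 2).choose (a % 2) = 1 := by
        rw [Nat.add_mod, ha, hb]; rfl
      rw [hdiv, hone, one_mul] at lucas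
      have hbit0 : (a &&& b) % 2 = 0 := by
        by_contra hc
        have h1 : (a &&& b) % 2 = 1 := by omega
        have h0 := Nat.testBit_land a b 0
        rw [Nat.testBit_zero, Nat.testBit_zero, Nat.testBit_zero, h1, ha, hb] at h0
        simp at h0
      have hiff2 : a &&& b = 0 ↔ a / 2 &&& b / 2 = 0 := by
        rw [land_div2']
        omega
      rcases Nat.eq_zero_or_pos n with hn | hn
      · have ha0 : a = 0 := by omega
        have hb0 : b = 0 := by omega
        subst ha0; subst hb0
        simp
      · have hlt : a / 2 + b / 2 < n := by omega
        have := ih _ hlt (a / 2) (b / 2) rfl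
        rw [hiff2, ← this, Nat.odd_iff, Nat.odd_iff, lucas]

lemma testBit_add_disjoint : ∀ i a b : ℕ, a &&& b = 0 →
    (a + b).testBit i = (a.testBit i || b.testBit i) := by
  intro i
  induction i with
  | zero =>
    intro a b h
    have hbit0 : ¬(a % 2 = 1 ∧ b % 2 = 1) := by
      intro ⟨ha, hb⟩
      have := Nat.testBit_land a b 0
      rw [h, Nat.zero_testBit] at this
      simp [Nat.testBit_zero, ha, hb] at this
    simp only [Nat.testBit_zero]
    rcases Nat.mod_two_eq_zero_or_one a with ha | ha <;>
      rcases Nat.mod_two_eq_zero_or_one b with hb | hb <;>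
      simp [ha, hb] <;> omega
  | succ i ihi =>
    intro a b h
    have h2 : a / 2 &&& b / 2 = 0 := by rw [land_div2', h]
    have hdiv : (a + b) / 2 = a / 2 + b / 2 := by
      have hbit0 : ¬(a % 2 = 1 ∧ b % 2 = 1) := by
        intro ⟨ha, hb⟩
        have := Nat.testBit_land a b 0
        rw [h, Nat.zero_testBit] at this
        simp [Nat.testBit_zero, ha, hb] at this
      omega
    rw [Nat.testBit_add_one, Nat.testBit_add_one, Nat.testBit_add_one, hdiv]
    exact ihi _ _ h2

/-- Proposition 2.5(2b): with `m = 2^e + Δ`, `1 ≤ Δ < 2^e`, `2Δ+1 ≤ t ≤ 2^e`,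
`C(t-Δ-1, Δ)` even, and `A = Δ`, the sum `C(2m-t, m) + C(2m-A-t, m-t)` is odd. -/
theorem stmt_5 (e Δ m t A : ℕ) (he : 1 ≤ e) (hΔ1 : 1 ≤ Δ) (hΔ2 : Δ < 2 ^ e)
    (hm : m = 2 ^ e + Δ) (ht1 : 2 * Δ + 1 ≤ t) (ht2 : t ≤ 2 ^ e)
    (heven : Even (Nat.choose (t - Δ - 1) Δ)) (hA : A = Δ) :
    Odd (Nat.choose (2 * m - t) m + Nat.choose (2 * m - A - t) (m - t)) := by
  set u := 2 ^ e + Δ - t with hu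
  set w := t - 2 * Δ - 1 with hw
  have h1 : 2 * m - A - t = u + 2 ^ e := by omega
  have h2 : m - t = u := by omega
  have h3 : 2 * m - t = m + u := by omega
  have h4 : t - Δ - 1 = Δ + w := by omega
  have hu_lt : u < 2 ^ e := by omega
  have hΔu_lt : Δ + u < 2 ^ e := by omega
  have hw_eq : w = 2 ^ e - (Δ + u + 1) := by omega
  rw [h1, h3, h2]
  have hodd2 : Odd ((u + 2 ^ e).choose u) := by
    rw [parityL _ u (2 ^ e) rfl, Nat.and_two_pow,
      Nat.testBit_lt_two_pow hu_lt]
    simp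
  have heven1 : ¬ Odd ((m + u).choose m) := by
    intro hodd
    rw [parityL _ m u rfl] at hodd
    have hΔu0 : Δ &&& u = 0 := by
      apply (land_zero_iff' _ _).mpr
      intro i ⟨hdi, hui⟩
      have hie : i < e := bit_lt' hΔ2 hdi
      have hmi : m.testBit i = Δ.testBit i := by
        rw [hm]; exact Nat.testBit_two_pow_add_gt hie Δ
      exact (land_zero_iff' _ _).mp hodd i ⟨hmi.trans hdi, hui⟩
    rw [h4, ← Nat.not_odd_iff_even, parityL _ Δ w rfl] at heven
    apply heven
    apply (land_zero_iff' _ _).mpr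
    intro i ⟨hdi, hwi⟩
    rw [hw_eq, Nat.testBit_two_pow_sub_succ hΔu_lt] at hwi
    have hor := testBit_add_disjoint i Δ u hΔu0
    simp [hor, hdi] at hwi
  exact (Nat.not_odd_iff_even.mp heven1).add_odd hodd2
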